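/- arXiv:1306.3956 — 2 statements merged into one kernel-verified Lean document; each statement's English description precedes it below -/
import Mathlib

section
/- (Banach–Kac formula) Let g : [a,b] → ℝ be continuously differentiable. Then for every continuous f : ℝ → ℝ, ∫_ℝ f(x) C^g(x) dx = ∫_a^b f(g(t)) |g'(t)| dt, where C^g(x) = #{t ∈ [a,b] : g(t) = x} is the number of crossings of level x. -/
open MeasureTheory
open scoped ENNReal NNReal

theorem stmt_18 (a b : ℝ) (hab : a ≤ b) (g g' : ℝ → ℝ)
    (hderiv : ∀ t ∈ Set.Icc a b, HasDerivWithinAt g (g' t) (Set.Icc a b) t)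
    (hcont : ContinuousOn g' (Set.Icc a b))
    (f : ℝ → ℝ) (hf : Continuous f) :
    ∫ x : ℝ, f x * (({t ∈ Set.Icc a b | g t = x}).ncard : ℝ) =
      ∫ t in a..b, f (g t) * |g' t| := by
  classical
  have hgc : ContinuousOn g (Set.Icc a b) := fun t ht => (hderiv t ht).continuousWithinAt
  set U : Set ℝ := Set.Ioo a b ∩ g' ⁻¹' {(0:ℝ)}ᶜ with hUdef
  have hUopen : IsOpen U :=
    (hcont.mono Set.Ioo_subset_Icc_self).isOpen_inter_preimage isOpen_Ioo
      isOpen_compl_singleton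
  have hUI : U ⊆ Set.Icc a b := fun t ht => Set.Ioo_subset_Icc_self ht.1
  -- connected components of U
  set S : Set (Set ℝ) := connectedComponentIn U '' U with hSdef
  have hcS : ∀ c ∈ S, c ⊆ U := by
    rintro c ⟨t, ht, rfl⟩; exact connectedComponentIn_subset U t
  have hcOpen : ∀ c ∈ S, IsOpen c := by
    rintro c ⟨t, ht, rfl⟩; exact hUopen.connectedComponentIn
  have hcPre : ∀ c ∈ S, IsPreconnected c := by
    rintro c ⟨t, ht, rfl⟩; exact isPreconnected_connectedComponentIn
  have hdisj : S.PairwiseDisjoint id := by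
    rintro c ⟨t, ht, rfl⟩ d ⟨u, hu, rfl⟩ hne
    rw [Function.onFun, Set.disjoint_left]
    intro z hz hz'
    exact hne ((connectedComponentIn_eq hz).trans (connectedComponentIn_eq hz').symm)
  have hScount : S.Countable := by
    apply Set.PairwiseDisjoint.countable_of_isOpen hdisj (fun c hc => hcOpen c hc)
    rintro c ⟨t, ht, rfl⟩
    exact ⟨t, mem_connectedComponentIn ht⟩
  have : Countable ↥S := hScount.to_subtype
  have hUnion : (⋃ (c : ↥S), (c : Set ℝ)) = U := by
    apply Set.Subset.antisymm
    · exact Set.iUnion_subset fun c => hcS c c.2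
    · intro t ht
      exact Set.mem_iUnion.2 ⟨⟨connectedComponentIn U t, Set.mem_image_of_mem _ ht⟩,
        mem_connectedComponentIn ht⟩
  have hPdisj : Pairwise (Function.onFun Disjoint fun c : ↥S => (c : Set ℝ)) := by
    intro c d hcd
    exact hdisj c.2 d.2 (fun h => hcd (Subtype.ext h))
  -- injectivity on components
  have hinj : ∀ c ∈ S, Set.InjOn g c := by
    intro c hc
    have hcU := hcS c hc
    have hco := hcOpen c hc
    have hcp := hcPre c hc
    have hcI : c ⊆ Set.Icc a b := fun t ht => hUI (hcU ht)
    have hda : ∀ t ∈ c, HasDerivAt g (g' t) t := fun t ht =>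
      (hderiv t (hcI ht)).hasDerivAt (Icc_mem_nhds (hcU ht).1.1 (hcU ht).1.2)
    have hdr : ∀ t ∈ c, deriv g t = g' t := fun t ht => (hda t ht).deriv
    have hconv : Convex ℝ c := hcp.ordConnected.convex
    have hgcc : ContinuousOn g c := fun t ht => (hda t ht).continuousAt.continuousWithinAt
    have hne : ∀ t ∈ c, g' t ≠ 0 := fun t ht => (hcU ht).2
    have hsign : (∀ t ∈ c, 0 < g' t) ∨ (∀ t ∈ c, g' t < 0) := by
      by_contra h
      push_neg at h
      obtain ⟨⟨x, hx, hx'⟩, ⟨y, hy, hy'⟩⟩ := h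
      have hxneg : g' x < 0 := lt_of_le_of_ne hx' (hne x hx)
      have hypos : 0 < g' y := lt_of_le_of_ne hy' (Ne.symm (hne y hy))
      have hsub : Set.uIcc x y ⊆ c := hcp.ordConnected.uIcc_subset hx hy
      have h0 : (0:ℝ) ∈ Set.uIcc (g' x) (g' y) :=
        Set.mem_uIcc.2 (Or.inl ⟨hxneg.le, hypos.le⟩)
      obtain ⟨z, hz, hz0⟩ := intermediate_value_uIcc (hcont.mono (hsub.trans hcI)) h0
      exact hne z (hsub hz) hz0
    rcases hsign with hpos | hneg
    · exact (strictMonoOn_of_deriv_pos hconv hgcc (fun t ht => by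
        rw [hco.interior_eq] at ht; rw [hdr t ht]; exact hpos t ht)).injOn
    · exact (strictAntiOn_of_deriv_neg hconv hgcc (fun t ht => by
        rw [hco.interior_eq] at ht; rw [hdr t ht]; exact hneg t ht)).injOn
  -- derivative within each component
  have hderivC : ∀ c ∈ S, ∀ t ∈ c, HasDerivWithinAt g (g' t) c t := fun c hc t ht =>
    (hderiv t (hUI (hcS c hc ht))).mono fun u hu => hUI (hcS c hc hu)
  -- measurability of images
  have hmeasIm : ∀ c ∈ S, MeasurableSet (g '' c) := by
    intro c hc
    have : IsPreconnected (g '' c) :=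
      (hcPre c hc).image g (hgc.mono fun t ht => hUI (hcS c hc ht))
    exact this.ordConnected.measurableSet
  -- the exceptional null set
  have hNnull : volume (g '' (Set.Icc a b \ U)) = 0 := by
    set Z : Set ℝ := {t ∈ Set.Icc a b | g' t = 0} with hZdef
    have hsub : Set.Icc a b \ U ⊆ {a, b} ∪ Z := by
      rintro t ⟨htI, htU⟩
      by_cases h0 : g' t = 0
      · exact Or.inr ⟨htI, h0⟩
      · left
        rcases eq_or_lt_of_le htI.1 with h | h
        · exact Or.inl h.symm
        rcases eq_or_lt_of_le htI.2 with h' | h'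
        · exact Or.inr h'
        exact absurd ⟨⟨h, h'⟩, h0⟩ htU
    have hZ : volume (g '' Z) = 0 :=
      MeasureTheory.addHaar_image_eq_zero_of_det_fderivWithin_eq_zero
        (μ := (volume : Measure ℝ)) (f := g)
        (f' := fun t => ContinuousLinearMap.toSpanSingleton ℝ (g' t)) (s := Z)
        (fun t ht => ((hderiv t ht.1).mono fun u hu => hu.1).hasFDerivWithinAt)
        (fun t ht => by simp only [ContinuousLinearMap.det_toSpanSingleton]; exact ht.2)
    refine measure_mono_null (Set.image_mono hsub) ?_
    rw [Set.image_union]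
    exact measure_union_null
      ((Set.Finite.image g ((Set.finite_singleton b).insert a)).measure_zero _) hZ
  -- indicator family
  set F : ↥S → ℝ → ℝ := fun c => (g '' (c : Set ℝ)).indicator f with hFdef
  -- pointwise counting identity off the null set
  have hcount : ∀ x : ℝ, x ∉ g '' (Set.Icc a b \ U) →
      f x * (({t ∈ Set.Icc a b | g t = x}).ncard : ℝ) = ∑' (c : ↥S), F c x := by
    intro x hx
    set L := {t ∈ Set.Icc a b | g t = x} with hL
    have hLU : L ⊆ U := by
      intro t ht
      by_contra h
      exact hx ⟨t, ⟨ht.1, h⟩, ht.2⟩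
    set A : Set ↥S := {c | x ∈ g '' (c : Set ℝ)} with hA
    let ψ : ↥L → ↥A := fun t =>
      ⟨⟨connectedComponentIn U (t : ℝ), Set.mem_image_of_mem _ (hLU t.2)⟩,
        ⟨(t : ℝ), mem_connectedComponentIn (hLU t.2), t.2.2⟩⟩
    have hbij : Function.Bijective ψ := by
      constructor
      · rintro ⟨t₁, ht₁⟩ ⟨t₂, ht₂⟩ h
        have hceq : connectedComponentIn U t₁ = connectedComponentIn U t₂ := by
          simpa [ψ, Subtype.ext_iff] using h
        have hmem : t₂ ∈ connectedComponentIn U t₁ := by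
          rw [hceq]; exact mem_connectedComponentIn (hLU ht₂)
        have hSc : connectedComponentIn U t₁ ∈ S := Set.mem_image_of_mem _ (hLU ht₁)
        exact Subtype.ext (hinj _ hSc (mem_connectedComponentIn (hLU ht₁)) hmem
          (ht₁.2.trans ht₂.2.symm))
      · rintro ⟨⟨c, hc⟩, hxa⟩
        obtain ⟨t, htc, hgt⟩ := hxa
        have htU : t ∈ U := hcS c hc htc
        refine ⟨⟨t, ⟨hUI htU, hgt⟩⟩, ?_⟩
        have hceq : connectedComponentIn U t = c := by
          obtain ⟨t₀, _, rfl⟩ := hc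
          exact (connectedComponentIn_eq htc).symm
        simp [ψ, Subtype.ext_iff, hceq]
    have hcard : Nat.card ↥A = Nat.card ↥L := (Nat.card_eq_of_bijective ψ hbij).symm
    have hkey : ((L.ncard : ℝ)) =
        ∑' (c : ↥S), Set.indicator (g '' (c : Set ℝ)) (fun _ => (1:ℝ)) x := by
      calc ((L.ncard : ℝ)) = (Nat.card ↥A : ℝ) := by
            rw [hcard, Nat.card_coe_set_eq]
        _ = ∑' (_ : ↥A), (1:ℝ) := by rw [tsum_const]; simp
        _ = ∑' (c : ↥S), A.indicator (fun _ => (1:ℝ)) c := tsum_subtype A fun _ => 1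
        _ = ∑' (c : ↥S), Set.indicator (g '' (c : Set ℝ)) (fun _ => (1:ℝ)) x := by
            apply tsum_congr
            intro c
            by_cases hc : x ∈ g '' (c : Set ℝ)
            · rw [Set.indicator_of_mem hc, Set.indicator_of_mem (show c ∈ A from hc)]
            · rw [Set.indicator_of_notMem hc,
                Set.indicator_of_notMem (show c ∉ A from hc)]
    have hFx : ∀ c : ↥S, F c x = f x * Set.indicator (g '' (c : Set ℝ)) (fun _ => (1:ℝ)) x := by
      intro c
      by_cases hc : x ∈ g '' (c : Set ℝ)
      · rw [hFdef]; simp [Set.indicator_of_mem hc]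
      · rw [hFdef]; simp [Set.indicator_of_notMem hc]
    rw [hkey]
    simp_rw [hFx]
    rw [tsum_mul_left]
  -- a.e. rewriting of the integrand
  have haecount : (fun x : ℝ => f x * (({t ∈ Set.Icc a b | g t = x}).ncard : ℝ))
      =ᵐ[volume] fun x => ∑' (c : ↥S), F c x := by
    have : ∀ᵐ x : ℝ, x ∉ g '' (Set.Icc a b \ U) := by
      rw [MeasureTheory.ae_iff]
      simp only [not_not]
      exact hNnull
    filter_upwards [this] with x hx using hcount x hx
  -- integrability of the master function on Icc
  have hhcont : ContinuousOn (fun t => |g' t| * f (g t)) (Set.Icc a b) :=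
    hcont.abs.mul (hf.comp_continuousOn hgc)
  have hhint : IntegrableOn (fun t => |g' t| * f (g t)) (Set.Icc a b) :=
    hhcont.integrableOn_compact isCompact_Icc
  -- lintegral summability
  have hlin : ∑' (c : ↥S), ∫⁻ x, ‖F c x‖₊ ∂volume ≠ ⊤ := by
    have step1 : ∀ c : ↥S, ∫⁻ x, ‖F c x‖₊ ∂volume
        = ∫⁻ t in (c : Set ℝ), ENNReal.ofReal (|g' t|) * ‖f (g t)‖₊ ∂volume := by
      intro c
      have h1 : ∀ x, (‖F c x‖₊ : ℝ≥0∞)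
          = (g '' (c : Set ℝ)).indicator (fun x => (‖f x‖₊ : ℝ≥0∞)) x := by
        intro x
        by_cases hx : x ∈ g '' (c : Set ℝ)
        · rw [hFdef]; simp [Set.indicator_of_mem hx]
        · rw [hFdef]; simp [Set.indicator_of_notMem hx]
      calc ∫⁻ x, ‖F c x‖₊ ∂volume
          = ∫⁻ x, (g '' (c : Set ℝ)).indicator (fun x => (‖f x‖₊ : ℝ≥0∞)) x ∂volume := by
            simp_rw [h1]
        _ = ∫⁻ x in g '' (c : Set ℝ), (‖f x‖₊ : ℝ≥0∞) ∂volume :=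
            lintegral_indicator (hmeasIm c c.2) (fun x => (‖f x‖₊ : ℝ≥0∞))
        _ = ∫⁻ t in (c : Set ℝ), ENNReal.ofReal (|g' t|) * ‖f (g t)‖₊ ∂volume := by
            have := MeasureTheory.lintegral_image_eq_lintegral_abs_det_fderiv_mul
              (μ := (volume : Measure ℝ)) ((hcOpen c c.2).measurableSet)
              (f' := fun t => ContinuousLinearMap.toSpanSingleton ℝ (g' t))
              (fun t ht => ((hderivC c c.2) t ht).hasFDerivWithinAt) (hinj c c.2)
              (fun x => (‖f x‖₊ : ℝ≥0∞))
            simpa [ContinuousLinearMap.det_toSpanSingleton] using this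
    obtain ⟨M, hM⟩ := isCompact_Icc.exists_bound_of_continuousOn hhcont
    have hpt : ∀ t ∈ Set.Icc a b,
        ENNReal.ofReal (|g' t|) * (‖f (g t)‖₊ : ℝ≥0∞) ≤ ENNReal.ofReal M := by
      intro t ht
      rw [← enorm_eq_nnnorm, ← ofReal_norm, ← ENNReal.ofReal_mul (abs_nonneg _)]
      apply ENNReal.ofReal_le_ofReal
      calc |g' t| * ‖f (g t)‖ = ‖|g' t| * f (g t)‖ := by
            rw [norm_mul, norm_abs_eq_norm]; rfl
        _ ≤ M := hM t ht
    have hchain : ∑' (c : ↥S), ∫⁻ x, ‖F c x‖₊ ∂volume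
        ≤ ENNReal.ofReal M * volume (Set.Icc a b) := by
      calc ∑' (c : ↥S), ∫⁻ x, ‖F c x‖₊ ∂volume
          = ∑' (c : ↥S), ∫⁻ t in (c : Set ℝ),
              ENNReal.ofReal (|g' t|) * ‖f (g t)‖₊ ∂volume := tsum_congr step1
        _ = ∫⁻ t in ⋃ (c : ↥S), (c : Set ℝ),
              ENNReal.ofReal (|g' t|) * ‖f (g t)‖₊ ∂volume :=
            (lintegral_iUnion (fun (c : ↥S) => (hcOpen c c.2).measurableSet) hPdisj _).symm
        _ ≤ ∫⁻ t in Set.Icc a b,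
              ENNReal.ofReal (|g' t|) * ‖f (g t)‖₊ ∂volume := by
            apply lintegral_mono_set
            rw [hUnion]
            exact hUI
        _ ≤ ∫⁻ _ in Set.Icc a b, ENNReal.ofReal M ∂volume :=
            setLIntegral_mono measurable_const hpt
        _ = ENNReal.ofReal M * volume (Set.Icc a b) := by
            rw [setLIntegral_const]
    exact ne_top_of_le_ne_top
      (ENNReal.mul_ne_top ENNReal.ofReal_ne_top measure_Icc_lt_top.ne) hchain
  -- strong measurability
  have hFmeas : ∀ c : ↥S, AEStronglyMeasurable (F c) volume := fun c =>
    hf.aestronglyMeasurable.indicator (hmeasIm c c.2)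
  -- the chain of Bochner integrals
  have hIU : IntegrableOn (fun t => |g' t| * f (g t)) U :=
    hhint.mono_set hUI
  calc ∫ x : ℝ, f x * (({t ∈ Set.Icc a b | g t = x}).ncard : ℝ)
      = ∫ x : ℝ, ∑' (c : ↥S), F c x := integral_congr_ae haecount
    _ = ∑' (c : ↥S), ∫ x : ℝ, F c x := integral_tsum hFmeas hlin
    _ = ∑' (c : ↥S), ∫ t in (c : Set ℝ), |g' t| * f (g t) := by
        apply tsum_congr
        intro c
        rw [hFdef]
        rw [integral_indicator (hmeasIm c c.2)]
        have := MeasureTheory.integral_image_eq_integral_abs_deriv_smul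
          ((hcOpen c c.2).measurableSet) (hderivC c c.2) (hinj c c.2) f
        simpa [smul_eq_mul] using this
    _ = ∫ t in ⋃ (c : ↥S), (c : Set ℝ), |g' t| * f (g t) := by
        refine (integral_iUnion (fun (c : ↥S) => (hcOpen c c.2).measurableSet) hPdisj ?_).symm
        rw [hUnion]; exact hIU
    _ = ∫ t in U, |g' t| * f (g t) := by rw [hUnion]
    _ = ∫ t in Set.Icc a b, |g' t| * f (g t) := by
        have hsplit : Set.Icc a b = U ∪ (Set.Icc a b \ U) := (Set.union_diff_cancel hUI).symm
        have hzero : ∫ t in Set.Icc a b \ U, |g' t| * f (g t) ∂volume = 0 := by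
          apply setIntegral_eq_zero_of_ae_eq_zero
          have hfin : ∀ᵐ t : ℝ, t ∉ ({a, b} : Set ℝ) := by
            rw [MeasureTheory.ae_iff]
            simp only [not_not]
            exact ((Set.finite_singleton b).insert a).measure_zero _
          filter_upwards [hfin] with t ht hmem
          by_cases h0 : g' t = 0
          · rw [h0]; simp
          · exfalso
            apply ht
            rcases eq_or_lt_of_le hmem.1.1 with h | h
            · exact Or.inl h.symm
            rcases eq_or_lt_of_le hmem.1.2 with h' | h'
            · exact Or.inr h'
            exact absurd ⟨⟨h, h'⟩, h0⟩ hmem.2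
        rw [hsplit, setIntegral_union Set.disjoint_sdiff_right
          (measurableSet_Icc.diff hUopen.measurableSet) hIU
          (hhint.mono_set Set.diff_subset), hzero, add_zero]
    _ = ∫ t in a..b, f (g t) * |g' t| := by
        rw [intervalIntegral.integral_of_le hab, ← MeasureTheory.integral_Icc_eq_integral_Ioc]
        exact setIntegral_congr_fun measurableSet_Icc fun t _ => mul_comm _ _
end

section
/- Let 0 < α < 2 and k ∈ ℕ with k ≥ 1, and let C(t,s) = t^α + s^α − |t−s|^α for t,s ∈ [0,1]. Then the n×n matrix Σ = (C(t_i,t_j))_{i,j} is positive semidefinite for any 0 ≤ t_1 < … < t_n ≤ 1. -/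
open MeasureTheory Real Set
open scoped ENNReal

namespace Stmt19Aux

/-- The spectral kernel `u ↦ (1 - cos (a u)) u^(-1-α)`. -/
noncomputable def fk (α a : ℝ) : ℝ → ℝ := fun u => (1 - Real.cos (a * u)) * u ^ (-1 - α)

lemma fk_nonneg {α a u : ℝ} (hu : 0 < u) : 0 ≤ fk α a u :=
  mul_nonneg (by linarith [Real.cos_le_one (a * u)]) (Real.rpow_nonneg hu.le _)

lemma fk_aesm (α a : ℝ) :
    AEStronglyMeasurable (fk α a) (volume.restrict (Ioi 0)) := by
  apply ContinuousOn.aestronglyMeasurable _ measurableSet_Ioi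
  exact (continuous_const.sub (Real.continuous_cos.comp
    (continuous_const.mul continuous_id))).continuousOn.mul
    (continuousOn_id.rpow_const fun x hx => Or.inl (ne_of_gt hx))

lemma fk_integrable {α : ℝ} (hα0 : 0 < α) (hα2 : α < 2) (a : ℝ) :
    IntegrableOn (fk α a) (Ioi 0) := by
  have h1 : IntegrableOn (fk α a) (Ioc 0 1) := by
    have hg : IntegrableOn (fun u : ℝ => a ^ 2 / 2 * u ^ (1 - α)) (Ioc 0 1) := by
      apply Integrable.const_mul
      have := intervalIntegral.intervalIntegrable_rpow' (a := 0) (b := 1) (r := 1 - α)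
        (by linarith)
      rwa [intervalIntegrable_iff_integrableOn_Ioc_of_le zero_le_one] at this
    refine MeasureTheory.Integrable.mono hg
      ((fk_aesm α a).mono_set Ioc_subset_Ioi_self) ?_
    rw [ae_restrict_iff' measurableSet_Ioc]
    filter_upwards with u hu
    have hu0 : 0 < u := hu.1
    rw [Real.norm_eq_abs, Real.norm_eq_abs, abs_of_nonneg (fk_nonneg hu0),
      abs_of_nonneg (by positivity)]
    have h1 : 1 - Real.cos (a * u) ≤ (a * u) ^ 2 / 2 := by
      have := Real.one_sub_sq_div_two_le_cos (x := a * u); linarith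
    have h2 : fk α a u ≤ (a * u) ^ 2 / 2 * u ^ (-1 - α) :=
      mul_le_mul_of_nonneg_right h1 (Real.rpow_nonneg hu0.le _)
    refine h2.trans (le_of_eq ?_)
    have hu2 : u ^ (2:ℝ) * u ^ (-1 - α) = u ^ (1 - α) := by
      rw [← Real.rpow_add hu0, show (2:ℝ) + (-1 - α) = 1 - α by ring]
    rw [show (a * u) ^ 2 / 2 * u ^ (-1 - α) = a ^ 2 / 2 * (u ^ (2:ℕ) * u ^ (-1 - α)) by ring,
      ← Real.rpow_natCast u 2]
    push_cast
    rw [hu2]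
  have h2 : IntegrableOn (fk α a) (Ioi 1) := by
    have hg : IntegrableOn (fun u : ℝ => 2 * u ^ (-1 - α)) (Ioi 1) :=
      (integrableOn_Ioi_rpow_of_lt (by linarith) one_pos).const_mul 2
    refine MeasureTheory.Integrable.mono hg
      ((fk_aesm α a).mono_set (Ioi_subset_Ioi zero_le_one)) ?_
    rw [ae_restrict_iff' measurableSet_Ioi]
    filter_upwards with u hu
    have hu0 : (0:ℝ) < u := lt_trans one_pos hu
    rw [Real.norm_eq_abs, Real.norm_eq_abs, abs_of_nonneg (fk_nonneg hu0),
      abs_of_nonneg (by positivity)]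
    have h1 : 1 - Real.cos (a * u) ≤ 2 := by
      have := Real.neg_one_le_cos (a * u); linarith
    exact mul_le_mul_of_nonneg_right h1 (Real.rpow_nonneg hu0.le _)
  have := h1.union h2
  rwa [Ioc_union_Ioi_eq_Ioi zero_le_one] at this

/-- The integral `J α a = ∫₀^∞ (1 - cos(au)) u^(-1-α) du`. -/
noncomputable def J (α a : ℝ) : ℝ := ∫ u in Ioi (0:ℝ), fk α a u

lemma J_scale {α : ℝ} {a : ℝ} (ha : 0 < a) : J α a = a ^ α * J α 1 := by
  have key : ∀ u ∈ Ioi (0:ℝ), fk α a u = a ^ (1 + α) * fk α 1 (a * u) := by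
    intro u hu
    have hu0 : (0:ℝ) < u := hu
    unfold fk
    rw [one_mul, Real.mul_rpow ha.le hu0.le]
    rw [show a ^ (1 + α) * ((1 - Real.cos (a * u)) * (a ^ (-1 - α) * u ^ (-1 - α)))
        = (a ^ (1 + α) * a ^ (-1 - α)) * ((1 - Real.cos (a * u)) * u ^ (-1 - α)) by ring,
      ← Real.rpow_add ha, show (1 + α) + (-1 - α) = (0:ℝ) by ring, Real.rpow_zero,
      one_mul]
  have h1 : (∫ u in Ioi (0:ℝ), fk α a u)
      = ∫ u in Ioi (0:ℝ), a ^ (1 + α) * fk α 1 (a * u) :=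
    setIntegral_congr_fun measurableSet_Ioi key
  unfold J
  rw [h1, MeasureTheory.integral_const_mul]
  have h2 := integral_comp_mul_left_Ioi (fk α 1) 0 ha
  rw [mul_zero] at h2
  rw [h2, smul_eq_mul]
  rw [show a ^ (1 + α) * (a⁻¹ * ∫ x in Ioi (0:ℝ), fk α 1 x)
      = (a ^ (1 + α) * a ^ (-1:ℝ)) * ∫ x in Ioi (0:ℝ), fk α 1 x by
        rw [Real.rpow_neg_one]; ring,
    ← Real.rpow_add ha, show (1 + α) + (-1:ℝ) = α by ring]

lemma J_abs {α : ℝ} (hα0 : 0 < α) (a : ℝ) : J α a = |a| ^ α * J α 1 := by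
  rcases lt_trichotomy a 0 with h | h | h
  · have hfk : fk α a = fk α (-a) := by
      funext u; unfold fk; rw [neg_mul, Real.cos_neg]
    have h2 : J α a = J α (-a) := by unfold J; rw [hfk]
    rw [h2, J_scale (by linarith : (0:ℝ) < -a), abs_of_neg h]
  · subst h
    have hfk : fk α 0 = fun _ => 0 := by
      funext u; unfold fk; simp
    unfold J
    rw [hfk]
    simp [Real.zero_rpow hα0.ne']
  · rw [J_scale h, abs_of_pos h]

lemma J_one_pos {α : ℝ} (hα0 : 0 < α) (hα2 : α < 2) : 0 < J α 1 := by
  have hnn : 0 ≤ᵐ[volume.restrict (Ioi (0:ℝ))] fk α 1 := by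
    filter_upwards [ae_restrict_mem measurableSet_Ioi] with u hu
    exact fk_nonneg hu
  unfold J
  rw [setIntegral_pos_iff_support_of_nonneg_ae hnn (fk_integrable hα0 hα2 1)]
  have hsub : Ioo (0:ℝ) 1 ⊆ Function.support (fk α 1) ∩ Ioi 0 := by
      intro u hu
      refine ⟨?_, hu.1⟩
      have hcos : Real.cos (1 * u) < 1 := by
        rw [one_mul]
        rcases lt_or_eq_of_le (Real.cos_le_one u) with h | h
        · exact h
        · exfalso
          have hpi := Real.pi_gt_three
          have := (Real.cos_eq_one_iff_of_lt_of_lt (x := u)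
            (by linarith [hu.1]) (by linarith [hu.2])).1 h
          linarith [hu.1]
      have : 0 < fk α 1 u :=
        mul_pos (by linarith) (Real.rpow_pos_of_pos hu.1 _)
      exact ne_of_gt this
  calc (0:ℝ≥0∞) < volume (Ioo (0:ℝ) 1) := by rw [Real.volume_Ioo]; norm_num
      _ ≤ volume (Function.support (fk α 1) ∩ Ioi 0) := measure_mono hsub

end Stmt19Aux

open Stmt19Aux

theorem stmt_19 (α : ℝ) (hα0 : 0 < α) (hα2 : α < 2) (n : ℕ)
    (t : Fin n → ℝ) (ht : ∀ i, t i ∈ Set.Icc (0:ℝ) 1) (hmono : StrictMono t) :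
    Matrix.PosSemidef (Matrix.of fun i j : Fin n =>
      t i ^ α + t j ^ α - |t i - t j| ^ α) := by
  have hI1 : 0 < J α 1 := J_one_pos hα0 hα2
  rw [Matrix.posSemidef_iff_dotProduct_mulVec]
  constructor
  · show Matrix.conjTranspose _ = _
    ext i j
    simp only [Matrix.conjTranspose_apply, Matrix.of_apply, star_trivial]
    rw [abs_sub_comm]
    ring
  · intro x
    -- The quadratic form
    set Q : ℝ := dotProduct (star x) (Matrix.mulVec (Matrix.of fun i j : Fin n =>
      t i ^ α + t j ^ α - |t i - t j| ^ α) x) with hQ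
    show 0 ≤ Q
    -- summand functions
    set h : Fin n → Fin n → ℝ → ℝ := fun i j u =>
      x i * x j * (fk α (t i) u + fk α (t j) u - fk α (t i - t j) u) with hh
    have hint : ∀ i j : Fin n, IntegrableOn (h i j) (Ioi 0) := by
      intro i j
      exact (((fk_integrable hα0 hα2 (t i)).add (fk_integrable hα0 hα2 (t j))).sub
        (fk_integrable hα0 hα2 (t i - t j))).const_mul (x i * x j)
    -- Step 1: Q * J α 1 = ∑ i ∑ j ∫ h i j
    have step1 : Q * J α 1 = ∑ i, ∑ j, x i * x j *
        (J α (t i) + J α (t j) - J α (t i - t j)) := by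
      rw [hQ]
      simp only [dotProduct, Matrix.mulVec, Matrix.of_apply, Pi.star_apply,
        star_trivial]
      rw [Finset.sum_mul]
      refine Finset.sum_congr rfl fun i _ => ?_
      rw [Finset.mul_sum, Finset.sum_mul]
      refine Finset.sum_congr rfl fun j _ => ?_
      rw [J_abs hα0 (t i), J_abs hα0 (t j), J_abs hα0 (t i - t j),
        abs_of_nonneg (ht i).1, abs_of_nonneg (ht j).1]
      ring
    -- Step 2: each double-sum term is an integral
    have step2 : ∀ i j : Fin n, x i * x j * (J α (t i) + J α (t j) - J α (t i - t j))
        = ∫ u in Ioi (0:ℝ), h i j u := by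
      intro i j
      simp only [hh]
      have hadd : IntegrableOn (fun u => fk α (t i) u + fk α (t j) u) (Ioi 0) :=
        (fk_integrable hα0 hα2 (t i)).add (fk_integrable hα0 hα2 (t j))
      have haddsub : IntegrableOn
          (fun u => fk α (t i) u + fk α (t j) u - fk α (t i - t j) u) (Ioi 0) :=
        hadd.sub (fk_integrable hα0 hα2 (t i - t j))
      rw [MeasureTheory.integral_const_mul,
        MeasureTheory.integral_sub hadd (fk_integrable hα0 hα2 (t i - t j)),
        MeasureTheory.integral_add (fk_integrable hα0 hα2 (t i))
          (fk_integrable hα0 hα2 (t j))]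
      rfl
    -- Step 3: swap sum and integral
    have step3 : ∑ i, ∑ j, (∫ u in Ioi (0:ℝ), h i j u)
        = ∫ u in Ioi (0:ℝ), ∑ i, ∑ j, h i j u := by
      rw [MeasureTheory.integral_finset_sum _
        (fun i _ => integrable_finset_sum _ (fun j _ => hint i j))]
      exact Finset.sum_congr rfl fun i _ =>
        (MeasureTheory.integral_finset_sum _ (fun j _ => hint i j)).symm
    -- Step 4: the integrand is a sum of squares, hence nonnegative
    have step4 : ∀ u ∈ Ioi (0:ℝ), 0 ≤ ∑ i, ∑ j, h i j u := by
      intro u hu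
      have key : ∑ i, ∑ j, h i j u
          = ((∑ i, x i * (1 - Real.cos (t i * u))) ^ 2
            + (∑ i, x i * Real.sin (t i * u)) ^ 2) * u ^ (-1 - α) := by
        rw [sq, sq, Finset.sum_mul_sum, Finset.sum_mul_sum, add_mul,
          Finset.sum_mul, Finset.sum_mul, ← Finset.sum_add_distrib]
        refine Finset.sum_congr rfl fun i _ => ?_
        rw [Finset.sum_mul, Finset.sum_mul, ← Finset.sum_add_distrib]
        refine Finset.sum_congr rfl fun j _ => ?_
        simp only [hh, fk, sub_mul, Real.cos_sub]
        ring
      rw [key]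
      have hw : (0:ℝ) ≤ u ^ (-1 - α) := Real.rpow_nonneg (le_of_lt hu) _
      positivity
    have hpos : 0 ≤ Q * J α 1 := by
      rw [step1]
      simp only [step2]
      rw [step3]
      exact setIntegral_nonneg measurableSet_Ioi step4
    nlinarith [hI1, hpos]
end
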